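/- (State error bound for pH-OpInf-ROM without hyper-reduction.) Let T > 0, let Φ ∈ ℝⁿˣʳ have orthonormal columns (ΦᵀΦ = I_r), let H: ℝⁿ → ℝ be continuously differentiable with ∇H Lipschitz continuous with constant C_Lip[∇H], and let D_r ∈ ℝʳˣʳ, B_r ∈ ℝʳˣᵐ. Let x: [0,T] → ℝⁿ be continuously differentiable, u: [0,T] → ℝᵐ continuous, d: [0,T] → ℝⁿ continuous, and let x_r: [0,T] → ℝʳ be continuously differentiable with ẋ_r(t) = D_r Φᵀ∇H(Φ x_r(t)) + B_r u(t) and x_r(0) = Φᵀ x(0). Define C₇ := C_logLip[x ↦ Φ D_r Φᵀ∇H(x)], C₈ := ‖D_rΦᵀ‖·C_Lip[∇H], α(T) := 3∫₀ᵀ e^{2C₇(T−τ)} dτ, and Ĉ(T) := max{1 + C₈²·T·α(T), T·α(T)}. Then ∫₀ᵀ ‖x(t) − Φx_r(t)‖² dt ≤ Ĉ(T)·( ∫₀ᵀ ‖x(t) − ΦΦᵀx(t)‖² dt + ∫₀ᵀ ‖ẋ(t) − d(t)‖² dt + ∫₀ᵀ ‖Φᵀd(t) − D_rΦᵀ∇H(x(t))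 − B_r u(t)‖² dt ). -/

import Mathlib

open Matrix MeasureTheory RealInnerProductSpace

noncomputable section

/-- Euclidean space `ℝⁿ`. -/
abbrev Evec (n : ℕ) := EuclideanSpace ℝ (Fin n)

/-- Matrix-vector product on Euclidean spaces. -/
def mv {a b : ℕ} (M : Matrix (Fin a) (Fin b) ℝ) (v : Evec b) : Evec a := WithLp.toLp 2 (M.mulVec v)

/-- Spectral (operator) norm of a real matrix, viewed as a linear map between
Euclidean spaces. -/
def spec {a b : ℕ} (M : Matrix (Fin a) (Fin b) ℝ) : ℝ :=
  ‖LinearMap.toContinuousLinearMap (Matrix.toEuclideanLin M)‖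

/-- The set of quotients defining the logarithmic Lipschitz constant
`C_logLip[f] = sup_{u ≠ v} ⟪u − v, f(u) − f(v)⟫ / ‖u − v‖²`. -/
def logLipSet {a : ℕ} (f : Evec a → Evec a) : Set ℝ :=
  {s : ℝ | ∃ u v : Evec a, u ≠ v ∧ s = ⟪u - v, f u - f v⟫ / ‖u - v‖ ^ 2}

namespace PHaux

lemma mv_adj {a b : ℕ} (M : Matrix (Fin a) (Fin b) ℝ) (u : Evec b) (v : Evec a) :
    ⟪mv M u, v⟫ = ⟪u, mv Mᵀ v⟫ := by
  simp only [mv, PiLp.inner_apply, RCLike.inner_apply, Matrix.mulVec, dotProduct,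
    Finset.sum_mul, Finset.mul_sum, starRingEnd_apply, star_trivial, transpose_apply]
  rw [Finset.sum_comm]
  exact Finset.sum_congr rfl fun i _ => Finset.sum_congr rfl fun j _ => by ring

lemma mv_le {a b : ℕ} (M : Matrix (Fin a) (Fin b) ℝ) (v : Evec b) :
    ‖mv M v‖ ≤ spec M * ‖v‖ :=
  (LinearMap.toContinuousLinearMap (Matrix.toEuclideanLin M)).le_opNorm v

lemma mv_mul {a b c : ℕ} (M : Matrix (Fin a) (Fin b) ℝ) (N : Matrix (Fin b) (Fin c) ℝ)
    (v : Evec c) : mv (M * N) v = mv M (mv N v) := by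
  simp [mv, Matrix.mulVec_mulVec]

lemma mv_add {a b : ℕ} (M : Matrix (Fin a) (Fin b) ℝ) (v w : Evec b) :
    mv M (v + w) = mv M v + mv M w := by
  ext i
  simp [mv, Matrix.mulVec, dotProduct, mul_add, Finset.sum_add_distrib]

lemma mv_sub {a b : ℕ} (M : Matrix (Fin a) (Fin b) ℝ) (v w : Evec b) :
    mv M (v - w) = mv M v - mv M w := by
  ext i
  simp [mv, Matrix.mulVec, dotProduct, mul_sub, Finset.sum_sub_distrib]

lemma mv_one {a : ℕ} (v : Evec a) : mv (1 : Matrix (Fin a) (Fin a) ℝ) v = v := by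
  ext i; simp [mv]

lemma mv_zero {a b : ℕ} (M : Matrix (Fin a) (Fin b) ℝ) : mv M (0 : Evec b) = 0 := by
  ext i; simp [mv]

lemma mv_deriv {a b : ℕ} (M : Matrix (Fin a) (Fin b) ℝ) {f : ℝ → Evec b} {f' : Evec b} {t : ℝ}
    (h : HasDerivAt f f' t) : HasDerivAt (fun s => mv M (f s)) (mv M f') t :=
  ((LinearMap.toContinuousLinearMap (Matrix.toEuclideanLin M)).hasFDerivAt.comp_hasDerivAt t h :)

lemma mv_cont {a b : ℕ} (M : Matrix (Fin a) (Fin b) ℝ) : Continuous (mv M (a := a)) :=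
  (LinearMap.toContinuousLinearMap (Matrix.toEuclideanLin M)).continuous

/-- Cauchy–Schwarz for interval integrals of nonnegative continuous functions. -/
lemma cs_int (a b : ℝ) (hab : a ≤ b) (f g : ℝ → ℝ)
    (hf : ContinuousOn f (Set.Icc a b)) (hg : ContinuousOn g (Set.Icc a b))
    (hf0 : ∀ s ∈ Set.Icc a b, 0 ≤ f s) (hg0 : ∀ s ∈ Set.Icc a b, 0 ≤ g s) :
    (∫ s in a..b, f s * g s) ^ 2 ≤ (∫ s in a..b, f s ^ 2) * (∫ s in a..b, g s ^ 2) := by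
  set A := ∫ s in a..b, f s ^ 2 with hA
  set B := ∫ s in a..b, g s ^ 2 with hB
  set S := ∫ s in a..b, f s * g s with hS
  have hicc : Set.uIcc a b = Set.Icc a b := Set.uIcc_of_le hab
  have hfi : IntervalIntegrable f volume a b := (hf.mono hicc.subset).intervalIntegrable
  have hgi : IntervalIntegrable g volume a b := (hg.mono hicc.subset).intervalIntegrable
  have hfgi : IntervalIntegrable (fun s => f s * g s) volume a b :=
    hfi.mul_continuousOn (hg.mono hicc.subset)
  have hf2i : IntervalIntegrable (fun s => f s ^ 2) volume a b := by
    simpa [sq] using hfi.mul_continuousOn (hf.mono hicc.subset)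
  have hg2i : IntervalIntegrable (fun s => g s ^ 2) volume a b := by
    simpa [sq] using hgi.mul_continuousOn (hg.mono hicc.subset)
  have hS0 : 0 ≤ S := intervalIntegral.integral_nonneg hab
    (fun s hs => mul_nonneg (hf0 s hs) (hg0 s hs))
  have hA0 : 0 ≤ A := intervalIntegral.integral_nonneg hab (fun s _ => sq_nonneg _)
  have hB0 : 0 ≤ B := intervalIntegral.integral_nonneg hab (fun s _ => sq_nonneg _)
  have key : ∀ l : ℝ, 0 < l → 2 * l * S ≤ l ^ 2 * A + B := by
    intro l hl
    have h1 : (∫ s in a..b, (2 * l) * (f s * g s)) ≤ ∫ s in a..b, (l ^ 2 * f s ^ 2 + g s ^ 2) := by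
      apply intervalIntegral.integral_mono_on hab (hfgi.const_mul _)
        ((hf2i.const_mul _).add hg2i)
      intro s hs
      nlinarith [sq_nonneg (l * f s - g s)]
    rw [intervalIntegral.integral_const_mul] at h1
    rw [intervalIntegral.integral_add (hf2i.const_mul _) hg2i,
      intervalIntegral.integral_const_mul] at h1
    linarith
  by_contra hcon
  push_neg at hcon
  have hSpos : 0 < S := by nlinarith
  rcases eq_or_lt_of_le hA0 with hA0' | hApos
  · have h := key (B / (2 * S) + 1) (by positivity)
    rw [← hA0'] at h
    have h2 : B / (2 * S) * (2 * S) = B := div_mul_cancel₀ _ (by positivity)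
    nlinarith
  · have h := key (S / A) (by positivity)
    have e1 : 2 * (S / A) * S = 2 * (S ^ 2 / A) := by field_simp
    have e2 : (S / A) ^ 2 * A = S ^ 2 / A := by field_simp [hApos.ne']
    rw [e1, e2] at h
    have h3 : S ^ 2 / A ≤ B := by linarith
    have h4 : S ^ 2 ≤ B * A := (div_le_iff₀ hApos).mp h3
    nlinarith

end PHaux

open PHaux

set_option maxHeartbeats 1000000 in
/-- State error bound for the pH-OpInf-ROM (no
hyper-reduction): with ROM `ẋ_r = D_r Φᵀ∇H(Φx_r) + B_r u`, `x_r(0) = Φᵀx(0)`,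
the squared `L²` state error is bounded by `Ĉ(T)` times the sum of the
projection, data and optimization errors, where the constants involve the
(finite) logarithmic Lipschitz constant `C₇ = C_logLip[x ↦ Φ D_r Φᵀ∇H(x)]`. -/
theorem state_error_bound_pH_OpInf_ROM {n r m : ℕ}
    (T : ℝ) (hT : 0 < T)
    (Φ : Matrix (Fin n) (Fin r) ℝ) (hΦ : Φᵀ * Φ = 1)
    (H : Evec n → ℝ) (gH : Evec n → Evec n)
    (hgrad : ∀ p, HasGradientAt H (gH p) p) (hgHc : Continuous gH)
    (CLipH : ℝ) (hLipH : ∀ a b : Evec n, ‖gH a - gH b‖ ≤ CLipH * ‖a - b‖)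
    (Dr : Matrix (Fin r) (Fin r) ℝ) (Br : Matrix (Fin r) (Fin m) ℝ)
    (x x' : ℝ → Evec n)
    (hx : ∀ t ∈ Set.Icc (0 : ℝ) T, HasDerivAt x (x' t) t)
    (hx'c : ContinuousOn x' (Set.Icc (0 : ℝ) T))
    (u : ℝ → Evec m) (hu : ContinuousOn u (Set.Icc (0 : ℝ) T))
    (dfun : ℝ → Evec n) (hdfun : ContinuousOn dfun (Set.Icc (0 : ℝ) T))
    (xr : ℝ → Evec r)
    (hxr : ∀ t ∈ Set.Icc (0 : ℝ) T, HasDerivAt xr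
      (mv Dr (mv Φᵀ (gH (mv Φ (xr t)))) + mv Br (u t)) t)
    (hxr0 : xr 0 = mv Φᵀ (x 0))
    (hbdd : BddAbove (logLipSet fun p => mv Φ (mv Dr (mv Φᵀ (gH p)))))
    (C₇ C₈ α CT : ℝ)
    (hC₇ : C₇ = sSup (logLipSet fun p => mv Φ (mv Dr (mv Φᵀ (gH p)))))
    (hC₈ : C₈ = spec (Dr * Φᵀ) * CLipH)
    (hα : α = 3 * ∫ τ in (0 : ℝ)..T, Real.exp (2 * C₇ * (T - τ)))
    (hCT : CT = max (1 + C₈ ^ 2 * T * α) (T * α)) :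
    ∫ t in (0 : ℝ)..T, ‖x t - mv Φ (xr t)‖ ^ 2 ≤
      CT * ((∫ t in (0 : ℝ)..T, ‖x t - mv Φ (mv Φᵀ (x t))‖ ^ 2)
        + (∫ t in (0 : ℝ)..T, ‖x' t - dfun t‖ ^ 2)
        + (∫ t in (0 : ℝ)..T,
            ‖mv Φᵀ (dfun t) - mv Dr (mv Φᵀ (gH (x t))) - mv Br (u t)‖ ^ 2)) := by
  have hT' : (0 : ℝ) ≤ T := hT.le
  -- basic norm facts
  have normΦ : ∀ v : Evec r, ‖mv Φ v‖ = ‖v‖ := by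
    intro v
    have h1 : ⟪mv Φ v, mv Φ v⟫ = ⟪v, v⟫ := by
      rw [mv_adj, ← mv_mul, hΦ, mv_one]
    have h2 : ‖mv Φ v‖ ^ 2 = ‖v‖ ^ 2 := by
      rw [← real_inner_self_eq_norm_sq, ← real_inner_self_eq_norm_sq, h1]
    nlinarith [norm_nonneg (mv Φ v), norm_nonneg v, sq_nonneg (‖mv Φ v‖ - ‖v‖),
      sq_nonneg (‖mv Φ v‖ + ‖v‖)]
  have normΦT : ∀ v : Evec n, ‖mv Φᵀ v‖ ≤ ‖v‖ := by
    intro v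
    have h1 : ‖mv Φᵀ v‖ ^ 2 = ⟪mv Φ (mv Φᵀ v), v⟫ := by
      rw [mv_adj, real_inner_self_eq_norm_sq]
    have h2 : ‖mv Φᵀ v‖ ^ 2 ≤ ‖mv Φᵀ v‖ * ‖v‖ := by
      rw [h1]
      calc ⟪mv Φ (mv Φᵀ v), v⟫ ≤ ‖mv Φ (mv Φᵀ v)‖ * ‖v‖ := real_inner_le_norm _ _
      _ = ‖mv Φᵀ v‖ * ‖v‖ := by rw [normΦ]
    rcases (norm_nonneg (mv Φᵀ v)).eq_or_lt' with h | h
    · rw [h]; exact norm_nonneg v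
    · nlinarith
  -- the error functions
  set f : Evec n → Evec n := fun p => mv Φ (mv Dr (mv Φᵀ (gH p))) with hf
  set z : ℝ → Evec n := fun t => mv Φ (mv Φᵀ (x t) - xr t) with hz
  set resid : ℝ → Evec r :=
    fun t => mv Φᵀ (dfun t) - mv Dr (mv Φᵀ (gH (x t))) - mv Br (u t) with hresid
  set g : ℝ → ℝ :=
    fun t => ‖x' t - dfun t‖ + ‖resid t‖ + |C₈| * ‖x t - mv Φ (mv Φᵀ (x t))‖ with hg
  set z' : ℝ → Evec n := fun t =>
    mv Φ (mv Φᵀ (x' t) - (mv Dr (mv Φᵀ (gH (mv Φ (xr t)))) + mv Br (u t))) with hz'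
  -- continuity
  have hxc : ContinuousOn x (Set.Icc (0 : ℝ) T) :=
    fun t ht => (hx t ht).continuousAt.continuousWithinAt
  have hxrc : ContinuousOn xr (Set.Icc (0 : ℝ) T) :=
    fun t ht => (hxr t ht).continuousAt.continuousWithinAt
  have hzc : ContinuousOn z (Set.Icc (0 : ℝ) T) :=
    (mv_cont Φ).comp_continuousOn
      (((mv_cont Φᵀ).comp_continuousOn hxc).sub hxrc)
  have hz'c : ContinuousOn z' (Set.Icc (0 : ℝ) T) :=
    (mv_cont Φ).comp_continuousOn
      (((mv_cont Φᵀ).comp_continuousOn hx'c).sub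
        (((mv_cont Dr).comp_continuousOn ((mv_cont Φᵀ).comp_continuousOn
          (hgHc.comp_continuousOn ((mv_cont Φ).comp_continuousOn hxrc)))).add
          ((mv_cont Br).comp_continuousOn hu)))
  have hresidc : ContinuousOn resid (Set.Icc (0 : ℝ) T) :=
    (((mv_cont Φᵀ).comp_continuousOn hdfun).sub
      ((mv_cont Dr).comp_continuousOn ((mv_cont Φᵀ).comp_continuousOn
        (hgHc.comp_continuousOn hxc)))).sub ((mv_cont Br).comp_continuousOn hu)
  have hgc : ContinuousOn g (Set.Icc (0 : ℝ) T) :=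
    (((hx'c.sub hdfun).norm.add hresidc.norm).add
      (continuousOn_const.mul
        ((hxc.sub ((mv_cont Φ).comp_continuousOn
          ((mv_cont Φᵀ).comp_continuousOn hxc))).norm)))
  have hg0 : ∀ t, 0 ≤ g t := fun t => by positivity
  -- derivative of z
  have hzd : ∀ t ∈ Set.Icc (0 : ℝ) T, HasDerivAt z (z' t) t :=
    fun t ht => mv_deriv Φ ((mv_deriv Φᵀ (hx t ht)).sub (hxr t ht))
  -- initial condition
  have hz0 : z 0 = 0 := by
    simp only [hz, hxr0, sub_self, mv_zero]
  -- key log-Lipschitz dissipation estimate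
  have key : ∀ t ∈ Set.Icc (0 : ℝ) T, ⟪z t, z' t⟫ ≤ C₇ * ‖z t‖ ^ 2 + ‖z t‖ * g t := by
    intro t ht
    have hzdef : z t = mv Φ (mv Φᵀ (x t)) - mv Φ (xr t) := mv_sub Φ _ _
    set uvec : Evec n := mv Φ (mv Φᵀ (x t)) with huvec
    set vvec : Evec n := mv Φ (xr t) with hvvec
    set Avec : Evec n := mv Φ (mv Φᵀ (x' t - dfun t)) + mv Φ (resid t)
      + mv Φ (mv Dr (mv Φᵀ (gH (x t) - gH uvec))) with hAvec
    have hsplit : z' t = (f uvec - f vvec) + Avec := by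
      rw [hAvec, hf]
      simp only [hz', hresid, mv_sub, mv_add]
      abel
    have h1 : ⟪z t, f uvec - f vvec⟫ ≤ C₇ * ‖z t‖ ^ 2 := by
      by_cases huv : uvec = vvec
      · have : z t = 0 := by rw [hzdef, huv, sub_self]
        simp [this]
      · have hmem : ⟪uvec - vvec, f uvec - f vvec⟫ / ‖uvec - vvec‖ ^ 2
            ∈ logLipSet f := ⟨uvec, vvec, huv, rfl⟩
        have hle : ⟪uvec - vvec, f uvec - f vvec⟫ / ‖uvec - vvec‖ ^ 2 ≤ C₇ := by
          rw [hC₇]; exact le_csSup hbdd hmem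
        have hpos : (0 : ℝ) < ‖uvec - vvec‖ ^ 2 :=
          pow_pos (norm_pos_iff.mpr (sub_ne_zero_of_ne huv)) 2
        have h2 : ⟪uvec - vvec, f uvec - f vvec⟫ ≤ C₇ * ‖uvec - vvec‖ ^ 2 :=
          (div_le_iff₀ hpos).mp hle
        have hzuv : z t = uvec - vvec := hzdef
        rw [hzuv]
        exact h2
    have hA : ‖Avec‖ ≤ g t := by
      have hb1 : ‖mv Φ (mv Φᵀ (x' t - dfun t))‖ ≤ ‖x' t - dfun t‖ := by
        rw [normΦ]; exact normΦT _
      have hb2 : ‖mv Φ (resid t)‖ = ‖resid t‖ := normΦ _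
      have hb3 : ‖mv Φ (mv Dr (mv Φᵀ (gH (x t) - gH uvec)))‖
          ≤ |C₈| * ‖x t - uvec‖ := by
        rw [normΦ, ← mv_mul]
        calc ‖mv (Dr * Φᵀ) (gH (x t) - gH uvec)‖
            ≤ spec (Dr * Φᵀ) * ‖gH (x t) - gH uvec‖ := mv_le _ _
        _ ≤ spec (Dr * Φᵀ) * (CLipH * ‖x t - uvec‖) := by
            apply mul_le_mul_of_nonneg_left (hLipH _ _)
            exact norm_nonneg _
        _ = C₈ * ‖x t - uvec‖ := by rw [hC₈]; ring
        _ ≤ |C₈| * ‖x t - uvec‖ :=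
            mul_le_mul_of_nonneg_right (le_abs_self _) (norm_nonneg _)
      calc ‖Avec‖ ≤ ‖mv Φ (mv Φᵀ (x' t - dfun t)) + mv Φ (resid t)‖
            + ‖mv Φ (mv Dr (mv Φᵀ (gH (x t) - gH uvec)))‖ := norm_add_le _ _
      _ ≤ (‖mv Φ (mv Φᵀ (x' t - dfun t))‖ + ‖mv Φ (resid t)‖)
            + ‖mv Φ (mv Dr (mv Φᵀ (gH (x t) - gH uvec)))‖ := by
          exact add_le_add_left (norm_add_le _ _) _
      _ ≤ (‖x' t - dfun t‖ + ‖resid t‖) + |C₈| * ‖x t - uvec‖ := by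
          apply add_le_add (add_le_add hb1 hb2.le) hb3
      _ = g t := by rw [hg]
    have h2 : ⟪z t, Avec⟫ ≤ ‖z t‖ * g t :=
      le_trans (real_inner_le_norm _ _)
        (mul_le_mul_of_nonneg_left hA (norm_nonneg _))
    calc ⟪z t, z' t⟫ = ⟪z t, f uvec - f vvec⟫ + ⟪z t, Avec⟫ := by
          rw [hsplit, inner_add_right]
    _ ≤ C₇ * ‖z t‖ ^ 2 + ‖z t‖ * g t := add_le_add h1 h2
  -- Grönwall-type machinery
  set E : ℝ → ℝ := fun s => Real.exp (-C₇ * s) with hE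
  set uu : ℝ → ℝ := fun s => E s ^ 2 * ‖z s‖ ^ 2 with huu
  set uu' : ℝ → ℝ := fun s =>
    (2 * E s * (-C₇ * E s)) * ‖z s‖ ^ 2 + E s ^ 2 * (2 * ⟪z s, z' s⟫) with huu'
  have hEc : Continuous E := Real.continuous_exp.comp (continuous_const.mul continuous_id)
  have hEpos : ∀ s, 0 < E s := fun s => Real.exp_pos _
  have hEd : ∀ s : ℝ, HasDerivAt E (-C₇ * E s) s := fun s => by
    simpa [hE, mul_comm] using ((hasDerivAt_id s).const_mul (-C₇)).exp
  have hn2d : ∀ s ∈ Set.Icc (0 : ℝ) T,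
      HasDerivAt (fun τ => ‖z τ‖ ^ 2) (2 * ⟪z s, z' s⟫) s := by
    intro s hs
    have h2 := (hzd s hs).inner ℝ (hzd s hs)
    simp only [real_inner_self_eq_norm_sq] at h2
    exact h2.congr_deriv (by rw [real_inner_comm (z' s) (z s)]; ring)
  have huud : ∀ s ∈ Set.Icc (0 : ℝ) T, HasDerivAt uu (uu' s) s := by
    intro s hs
    have h1 : HasDerivAt (fun τ => E τ ^ 2) (2 * E s * (-C₇ * E s)) s := by
      exact ((hEd s).pow 2).congr_deriv (by norm_num)
    exact h1.mul (hn2d s hs)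
  have huu'le : ∀ s ∈ Set.Icc (0 : ℝ) T, uu' s ≤ 2 * E s * g s * (E s * ‖z s‖) := by
    intro s hs
    have hk := key s hs
    have hk2 : E s ^ 2 * ⟪z s, z' s⟫ ≤ E s ^ 2 * (C₇ * ‖z s‖ ^ 2 + ‖z s‖ * g s) :=
      mul_le_mul_of_nonneg_left hk (sq_nonneg _)
    simp only [huu']
    nlinarith [hk2]
  have hsqrtuu : ∀ s : ℝ, Real.sqrt (uu s) = E s * ‖z s‖ := by
    intro s
    simp only [huu]
    rw [show E s ^ 2 * ‖z s‖ ^ 2 = (E s * ‖z s‖) ^ 2 from by ring]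
    exact Real.sqrt_sq (mul_nonneg (hEpos s).le (norm_nonneg _))
  have huu0 : ∀ s, 0 ≤ uu s := fun s => by rw [huu]; positivity
  have huuc : ContinuousOn uu (Set.Icc (0 : ℝ) T) :=
    (hEc.pow 2).continuousOn.mul (hzc.norm.pow 2)
  have huu'c : ContinuousOn uu' (Set.Icc (0 : ℝ) T) := by
    apply ContinuousOn.add
    · exact (((continuous_const.mul hEc).mul (continuous_const.mul hEc)).continuousOn.mul
        (hzc.norm.pow 2))
    · exact ((hEc.pow 2).continuousOn.mul (continuousOn_const.mul (hzc.inner hz'c)))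
  have sqb : ∀ t ∈ Set.Icc (0 : ℝ) T,
      Real.sqrt (uu t) ≤ ∫ σ in (0 : ℝ)..t, E σ * g σ := by
    intro t ht
    have hsub : Set.Icc (0 : ℝ) t ⊆ Set.Icc (0 : ℝ) T := Set.Icc_subset_Icc le_rfl ht.2
    have huicc : Set.uIcc (0 : ℝ) t = Set.Icc (0 : ℝ) t := Set.uIcc_of_le ht.1
    apply le_of_forall_pos_le_add
    intro ε hε
    set vv : ℝ → ℝ := fun s => Real.sqrt (uu s + ε ^ 2) with hvv
    have hvvpos : ∀ s, 0 < vv s := fun s =>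
      Real.sqrt_pos.mpr (add_pos_of_nonneg_of_pos (huu0 s) (pow_pos hε 2))
    have hvvc : ContinuousOn vv (Set.Icc (0 : ℝ) t) :=
      Real.continuous_sqrt.comp_continuousOn ((huuc.mono hsub).add continuousOn_const)
    have hvvd : ∀ s ∈ Set.uIcc (0 : ℝ) t, HasDerivAt vv (uu' s / (2 * vv s)) s := by
      intro s hs
      have hs' : s ∈ Set.Icc (0 : ℝ) T := hsub (huicc ▸ hs)
      have h0 : uu s + ε ^ 2 ≠ 0 :=
        (add_pos_of_nonneg_of_pos (huu0 s) (pow_pos hε 2)).ne'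
      exact ((huud s hs').add_const (ε ^ 2)).sqrt h0
    have hint : IntervalIntegrable (fun s => uu' s / (2 * vv s)) volume 0 t := by
      apply ContinuousOn.intervalIntegrable
      rw [huicc]
      exact (huu'c.mono hsub).div (continuousOn_const.mul hvvc)
        (fun s _ => (by positivity : (0:ℝ) < 2 * vv s).ne')
    have hEgi : IntervalIntegrable (fun σ => E σ * g σ) volume 0 t := by
      apply ContinuousOn.intervalIntegrable
      rw [huicc]
      exact hEc.continuousOn.mul (hgc.mono hsub)
    have hftc : ∫ σ in (0 : ℝ)..t, uu' σ / (2 * vv σ) = vv t - vv 0 :=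
      intervalIntegral.integral_eq_sub_of_hasDerivAt hvvd hint
    have hmono : ∫ σ in (0 : ℝ)..t, uu' σ / (2 * vv σ)
        ≤ ∫ σ in (0 : ℝ)..t, E σ * g σ := by
      apply intervalIntegral.integral_mono_on ht.1 hint hEgi
      intro s hs
      have hs' : s ∈ Set.Icc (0 : ℝ) T := hsub hs
      rw [div_le_iff₀ (by positivity : (0:ℝ) < 2 * vv s)]
      calc uu' s ≤ 2 * E s * g s * (E s * ‖z s‖) := huu'le s hs'
      _ = 2 * E s * g s * Real.sqrt (uu s) := by rw [hsqrtuu]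
      _ ≤ 2 * E s * g s * vv s := by
          apply mul_le_mul_of_nonneg_left
            (Real.sqrt_le_sqrt (by nlinarith [sq_nonneg ε] : uu s ≤ uu s + ε ^ 2))
          have := hEpos s
          have := hg0 s
          positivity
      _ = E s * g s * (2 * vv s) := by ring
    have huu00 : uu 0 = 0 := by rw [huu]; simp [hz0]
    have hvv0 : vv 0 = ε := by
      rw [hvv]; simp only [huu00, zero_add]; exact Real.sqrt_sq hε.le
    calc Real.sqrt (uu t) ≤ vv t :=
        Real.sqrt_le_sqrt (by nlinarith [sq_nonneg ε] : uu t ≤ uu t + ε ^ 2)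
    _ = vv 0 + ∫ σ in (0 : ℝ)..t, uu' σ / (2 * vv σ) := by rw [hftc]; ring
    _ ≤ (∫ σ in (0 : ℝ)..t, E σ * g σ) + ε := by rw [hvv0]; linarith [hmono]
  -- Grönwall-type estimate
  have hJ0 : ∀ t ∈ Set.Icc (0 : ℝ) T,
      ‖z t‖ ^ 2 ≤ (∫ s in (0 : ℝ)..T, Real.exp (2 * C₇ * s)) * ∫ σ in (0 : ℝ)..T, g σ ^ 2 := by
    intro t ht
    have hsub : Set.Icc (0 : ℝ) t ⊆ Set.Icc (0 : ℝ) T := Set.Icc_subset_Icc le_rfl ht.2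
    have h1 : uu t ≤ (∫ σ in (0 : ℝ)..t, E σ * g σ) ^ 2 := by
      calc uu t = Real.sqrt (uu t) ^ 2 := (Real.sq_sqrt (huu0 t)).symm
      _ ≤ (∫ σ in (0 : ℝ)..t, E σ * g σ) ^ 2 :=
          pow_le_pow_left₀ (Real.sqrt_nonneg _) (sqb t ht) 2
    have hCS : (∫ σ in (0 : ℝ)..t, E σ * g σ) ^ 2
        ≤ (∫ σ in (0 : ℝ)..t, E σ ^ 2) * (∫ σ in (0 : ℝ)..t, g σ ^ 2) :=
      cs_int 0 t ht.1 E g hEc.continuousOn (hgc.mono hsub)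
        (fun s _ => (hEpos s).le) (fun s _ => hg0 s)
    have hJt : Real.exp (2 * C₇ * t) * ∫ σ in (0 : ℝ)..t, E σ ^ 2
        = ∫ s in (0 : ℝ)..t, Real.exp (2 * C₇ * s) := by
      have he : ∀ σ : ℝ, E σ ^ 2 = Real.exp (-(2 * C₇) * σ) := by
        intro σ; rw [hE]; simp only; rw [sq, ← Real.exp_add]; congr 1; ring
      calc Real.exp (2 * C₇ * t) * ∫ σ in (0 : ℝ)..t, E σ ^ 2
          = Real.exp (2 * C₇ * t) * ∫ σ in (0 : ℝ)..t, Real.exp (-(2 * C₇) * σ) := by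
            rw [intervalIntegral.integral_congr (fun σ _ => he σ)]
        _ = ∫ σ in (0 : ℝ)..t, Real.exp (2 * C₇ * t) * Real.exp (-(2 * C₇) * σ) :=
            (intervalIntegral.integral_const_mul _ _).symm
        _ = ∫ σ in (0 : ℝ)..t, Real.exp (2 * C₇ * (t - σ)) :=
            intervalIntegral.integral_congr
              (fun σ _ => by rw [← Real.exp_add]; congr 1; ring)
        _ = ∫ s in (0 : ℝ)..t, Real.exp (2 * C₇ * s) := by
            simpa using intervalIntegral.integral_comp_sub_left
              (a := 0) (b := t) (fun s => Real.exp (2 * C₇ * s)) t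
    have hexpi : ∀ a b : ℝ, IntervalIntegrable (fun s => Real.exp (2 * C₇ * s)) volume a b :=
      fun a b => (Real.continuous_exp.comp (continuous_const.mul continuous_id)).intervalIntegrable a b
    have hJmono : (∫ s in (0 : ℝ)..t, Real.exp (2 * C₇ * s))
        ≤ ∫ s in (0 : ℝ)..T, Real.exp (2 * C₇ * s) := by
      have hadd := intervalIntegral.integral_add_adjacent_intervals
        (hexpi 0 t) (hexpi t T)
      have h0 : 0 ≤ ∫ s in t..T, Real.exp (2 * C₇ * s) :=
        intervalIntegral.integral_nonneg ht.2 (fun s _ => (Real.exp_pos _).le)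
      linarith
    have hg2i : ∀ a b : ℝ, a ≤ b → Set.Icc a b ⊆ Set.Icc (0 : ℝ) T →
        IntervalIntegrable (fun σ => g σ ^ 2) volume a b := by
      intro a b hab hsub'
      apply ContinuousOn.intervalIntegrable
      rw [Set.uIcc_of_le hab]
      exact (hgc.mono hsub').norm.pow 2 |>.congr (fun s hs => by
        simp [abs_of_nonneg (hg0 s)]) |>.mono le_rfl
    have hgmono : (∫ σ in (0 : ℝ)..t, g σ ^ 2) ≤ ∫ σ in (0 : ℝ)..T, g σ ^ 2 := by
      have hadd := intervalIntegral.integral_add_adjacent_intervals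
        (hg2i 0 t ht.1 hsub) (hg2i t T ht.2 (Set.Icc_subset_Icc ht.1 le_rfl))
      have h0 : 0 ≤ ∫ σ in t..T, g σ ^ 2 :=
        intervalIntegral.integral_nonneg ht.2 (fun s _ => sq_nonneg _)
      linarith
    have hzuu : ‖z t‖ ^ 2 = Real.exp (2 * C₇ * t) * uu t := by
      have hone : Real.exp (2 * C₇ * t) * Real.exp (-C₇ * t) ^ 2 = 1 := by
        rw [sq, ← Real.exp_add, ← Real.exp_add, ← Real.exp_zero]
        congr 1
        ring
      simp only [huu, hE]
      rw [← mul_assoc, hone, one_mul]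
    calc ‖z t‖ ^ 2 = Real.exp (2 * C₇ * t) * uu t := hzuu
    _ ≤ Real.exp (2 * C₇ * t)
        * ((∫ σ in (0 : ℝ)..t, E σ ^ 2) * (∫ σ in (0 : ℝ)..t, g σ ^ 2)) :=
        mul_le_mul_of_nonneg_left (le_trans h1 hCS) (Real.exp_pos _).le
    _ = (∫ s in (0 : ℝ)..t, Real.exp (2 * C₇ * s)) * ∫ σ in (0 : ℝ)..t, g σ ^ 2 := by
        rw [← hJt]; ring
    _ ≤ (∫ s in (0 : ℝ)..T, Real.exp (2 * C₇ * s)) * ∫ σ in (0 : ℝ)..T, g σ ^ 2 := by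
        apply mul_le_mul hJmono hgmono
          (intervalIntegral.integral_nonneg ht.1 (fun s _ => sq_nonneg _))
          (intervalIntegral.integral_nonneg hT' (fun s _ => (Real.exp_pos _).le))
  -- Pythagoras decomposition
  have hdecomp : ∀ t : ℝ, x t - mv Φ (xr t) = (x t - mv Φ (mv Φᵀ (x t))) + z t := by
    intro t
    simp only [hz, mv_sub]
    abel
  have horth : ∀ t : ℝ, ⟪x t - mv Φ (mv Φᵀ (x t)), z t⟫ = 0 := by
    intro t
    rw [real_inner_comm]
    simp only [hz]
    rw [mv_adj Φ]
    have h0 : mv Φᵀ (x t - mv Φ (mv Φᵀ (x t))) = 0 := by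
      rw [mv_sub, ← mv_mul, hΦ, mv_one, sub_self]
    rw [h0, inner_zero_right]
  have hpyth : ∀ t : ℝ, ‖x t - mv Φ (xr t)‖ ^ 2
      = ‖x t - mv Φ (mv Φᵀ (x t))‖ ^ 2 + ‖z t‖ ^ 2 := by
    intro t
    rw [hdecomp t, norm_add_sq_real, horth t]
    ring
  -- integrability over [0,T]
  have hicc : Set.uIcc (0 : ℝ) T = Set.Icc (0 : ℝ) T := Set.uIcc_of_le hT'
  have intP : IntervalIntegrable (fun t => ‖x t - mv Φ (mv Φᵀ (x t))‖ ^ 2) volume 0 T := by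
    apply ContinuousOn.intervalIntegrable
    rw [hicc]
    exact ((hxc.sub ((mv_cont Φ).comp_continuousOn
      ((mv_cont Φᵀ).comp_continuousOn hxc))).norm.pow 2)
  have intZ : IntervalIntegrable (fun t => ‖z t‖ ^ 2) volume 0 T := by
    apply ContinuousOn.intervalIntegrable
    rw [hicc]
    exact hzc.norm.pow 2
  have intD : IntervalIntegrable (fun t => ‖x' t - dfun t‖ ^ 2) volume 0 T := by
    apply ContinuousOn.intervalIntegrable
    rw [hicc]
    exact (hx'c.sub hdfun).norm.pow 2
  have intO : IntervalIntegrable (fun t => ‖resid t‖ ^ 2) volume 0 T := by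
    apply ContinuousOn.intervalIntegrable
    rw [hicc]
    exact hresidc.norm.pow 2
  have intg2 : IntervalIntegrable (fun t => g t ^ 2) volume 0 T := by
    apply ContinuousOn.intervalIntegrable
    rw [hicc]
    exact hgc.pow 2
  set JT : ℝ := ∫ s in (0 : ℝ)..T, Real.exp (2 * C₇ * s) with hJT
  set P : ℝ := ∫ t in (0 : ℝ)..T, ‖x t - mv Φ (mv Φᵀ (x t))‖ ^ 2 with hP
  set D : ℝ := ∫ t in (0 : ℝ)..T, ‖x' t - dfun t‖ ^ 2 with hD
  set O : ℝ := ∫ t in (0 : ℝ)..T, ‖resid t‖ ^ 2 with hO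
  set Z : ℝ := ∫ t in (0 : ℝ)..T, ‖z t‖ ^ 2 with hZdef
  set G : ℝ := ∫ t in (0 : ℝ)..T, g t ^ 2 with hG
  have hJTnn : 0 ≤ JT :=
    intervalIntegral.integral_nonneg hT' (fun s _ => (Real.exp_pos _).le)
  have hGnn : 0 ≤ G := intervalIntegral.integral_nonneg hT' (fun s _ => sq_nonneg _)
  have hPnn : 0 ≤ P := intervalIntegral.integral_nonneg hT' (fun s _ => sq_nonneg _)
  have hDnn : 0 ≤ D := intervalIntegral.integral_nonneg hT' (fun s _ => sq_nonneg _)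
  have hOnn : 0 ≤ O := intervalIntegral.integral_nonneg hT' (fun s _ => sq_nonneg _)
  have hαJ : α = 3 * JT := by
    rw [hα, hJT]
    congr 1
    simpa using intervalIntegral.integral_comp_sub_left
      (a := 0) (b := T) (fun s => Real.exp (2 * C₇ * s)) T
  -- bound on Z
  have hZb : Z ≤ T * (JT * G) := by
    have h1 : Z ≤ ∫ _t in (0 : ℝ)..T, (JT * G) :=
      intervalIntegral.integral_mono_on hT' intZ intervalIntegrable_const
        (fun t ht => hJ0 t ht)
    rw [intervalIntegral.integral_const] at h1
    simpa [sub_zero, smul_eq_mul] using h1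
  -- bound on G
  have hGb : G ≤ 3 * (D + O + C₈ ^ 2 * P) := by
    have hpt : ∀ s ∈ Set.Icc (0 : ℝ) T, g s ^ 2
        ≤ 3 * (‖x' s - dfun s‖ ^ 2 + ‖resid s‖ ^ 2
          + C₈ ^ 2 * ‖x s - mv Φ (mv Φᵀ (x s))‖ ^ 2) := by
      intro s _
      simp only [hg]
      nlinarith [sq_nonneg (‖x' s - dfun s‖ - ‖resid s‖),
        sq_nonneg (‖x' s - dfun s‖ - |C₈| * ‖x s - mv Φ (mv Φᵀ (x s))‖),
        sq_nonneg (‖resid s‖ - |C₈| * ‖x s - mv Φ (mv Φᵀ (x s))‖),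
        sq_abs C₈]
    have h2 : G ≤ ∫ s in (0 : ℝ)..T, 3 * (‖x' s - dfun s‖ ^ 2 + ‖resid s‖ ^ 2
        + C₈ ^ 2 * ‖x s - mv Φ (mv Φᵀ (x s))‖ ^ 2) := by
      apply intervalIntegral.integral_mono_on hT' intg2 _ hpt
      exact ((intD.add intO).add (intP.const_mul _)).const_mul _
    rw [intervalIntegral.integral_const_mul,
      intervalIntegral.integral_add (intD.add intO) (intP.const_mul _),
      intervalIntegral.integral_add intD intO,
      intervalIntegral.integral_const_mul] at h2
    exact h2
  -- assemble
  have hLHS : ∫ t in (0 : ℝ)..T, ‖x t - mv Φ (xr t)‖ ^ 2 = P + Z := by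
    rw [intervalIntegral.integral_congr (g := fun t =>
        ‖x t - mv Φ (mv Φᵀ (x t))‖ ^ 2 + ‖z t‖ ^ 2) (fun t _ => hpyth t)]
    rw [intervalIntegral.integral_add intP intZ]
  rw [hLHS]
  have h1m : 1 + C₈ ^ 2 * T * α ≤ CT := hCT ▸ le_max_left _ _
  have h2m : T * α ≤ CT := hCT ▸ le_max_right _ _
  have hZfin : Z ≤ T * α * (D + O + C₈ ^ 2 * P) := by
    calc Z ≤ T * (JT * G) := hZb
    _ ≤ T * (JT * (3 * (D + O + C₈ ^ 2 * P))) := by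
        apply mul_le_mul_of_nonneg_left (mul_le_mul_of_nonneg_left hGb hJTnn) hT'
    _ = T * α * (D + O + C₈ ^ 2 * P) := by rw [hαJ]; ring
  have e1 : (1 + C₈ ^ 2 * T * α) * P ≤ CT * P := mul_le_mul_of_nonneg_right h1m hPnn
  have e2 : T * α * D ≤ CT * D := mul_le_mul_of_nonneg_right h2m hDnn
  have e3 : T * α * O ≤ CT * O := mul_le_mul_of_nonneg_right h2m hOnn
  nlinarith [e1, e2, e3, hZfin]
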